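/- The spectral radius of the 3×3 real matrix FV⁻¹ = [[0, v_w(μ_a+ψ)μ_fu φ_w/(b_f ψ μ_fw φ_u), 0], [b_f ψ/(μ_a+ψ), 0, 0], [b_m ψ/(μ_a+ψ), 0, 0]] equals R_0 = sqrt(v_w (φ_w/μ_fw)(μ_fu/φ_u)). -/

import Mathlib

/-- The spectral radius of the next-generation matrix FV⁻¹ equals
`R₀ = sqrt(v_w (φ_w/μ_fw)(μ_fu/φ_u))`. -/
theorem spectralRadius_next_generation_matrix
    (bf vw φu φw ψ μa μfu μfw μmw : ℝ)
    (hbf : 0 < bf) (hbf1 : bf < 1) (hvw0 : 0 < vw) (hvw1 : vw ≤ 1)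
    (hφu : 0 < φu) (hφw : 0 < φw) (hψ : 0 < ψ) (hμa : 0 < μa)
    (hμfu : 0 < μfu) (hμfw : 0 < μfw) (hμmw : 0 < μmw) :
    spectralRadius ℂ
      ((!![0, vw * (μa + ψ) * μfu * φw / (bf * ψ * μfw * φu), 0;
          bf * ψ / (μa + ψ), 0, 0;
          (1 - bf) * ψ / (μa + ψ), 0, 0] : Matrix (Fin 3) (Fin 3) ℝ).map
        (Complex.ofReal)) =
      ENNReal.ofReal (Real.sqrt (vw * (φw / μfw) * (μfu / φu))) := by
  set a : ℝ := vw * (μa + ψ) * μfu * φw / (bf * ψ * μfw * φu) with ha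
  set c : ℝ := bf * ψ / (μa + ψ) with hc
  set d : ℝ := (1 - bf) * ψ / (μa + ψ) with hd
  set s : ℝ := vw * (φw / μfw) * (μfu / φu) with hs
  set r : ℝ := Real.sqrt s with hr
  have hs0 : 0 < s := by positivity
  have hr0 : 0 < r := Real.sqrt_pos.mpr hs0
  have hac : a * c = s := by
    rw [ha, hc, hs]
    field_simp [ha, hc, hs]
  have hr2 : r * r = s := Real.mul_self_sqrt hs0.le
  have hspec : spectrum ℂ
      ((!![0, a, 0; c, 0, 0; d, 0, 0] : Matrix (Fin 3) (Fin 3) ℝ).map Complex.ofReal)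
      = {0, (r : ℂ), (-r : ℂ)} := by
    ext z
    rw [spectrum.mem_iff]
    have hdet : ¬IsUnit ((algebraMap ℂ (Matrix (Fin 3) (Fin 3) ℂ)) z -
        (!![0, a, 0; c, 0, 0; d, 0, 0] : Matrix (Fin 3) (Fin 3) ℝ).map Complex.ofReal) ↔
        z * z * z - (a * c : ℝ) * z = 0 := by
      rw [Matrix.isUnit_iff_isUnit_det, isUnit_iff_ne_zero, not_not]
      rw [Matrix.det_fin_three]
      simp [Matrix.algebraMap_eq_diagonal, Matrix.diagonal_apply, Matrix.sub_apply,
        Matrix.map_apply, Matrix.vecHead, Matrix.vecTail]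
    rw [hdet, hac]
    have hfac : z * z * z - (s : ℝ) * z = z * (z - (r : ℂ)) * (z + (r : ℂ)) := by
      have : ((r : ℂ)) * ((r : ℂ)) = (s : ℝ) := by
        rw [← hr2]; push_cast; ring
      rw [← this]; ring
    rw [hfac]
    simp only [mul_eq_zero, sub_eq_zero, add_eq_zero_iff_eq_neg, Set.mem_insert_iff,
      Set.mem_singleton_iff]
    tauto
  rw [spectralRadius, hspec]
  rw [iSup_insert, iSup_insert, iSup_singleton]
  simp [Complex.nnnorm_real, ENNReal.ofReal, Real.nnnorm_of_nonneg hr0.le,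
    Real.toNNReal_of_nonneg hr0.le]
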